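/- Let Γ = [N]^p (p ∈ {1,2,3}), Λ = [2k+1]^p with 2k+1 ≤ N and d := |Λ|, and for i ∈ Γ let Λ_i be Λ translated to be centered at i. Let E ⊂ ℝ be bounded with |x| ≤ M for all x ∈ E, and for each i ∈ Γ let f_i : ℝ^{Λ_i∩Γ} → ℝ be PL(2) with constant L_i ≤ L. Define F : E^Γ → ℝ by F(x) := Σ_{i∈Γ} f_i(x_{Λ_i∩Γ}), and for each site i ∈ Γ let δ_i(F) := sup{ |F(ξ) − F(ξ')| : ξ, ξ' ∈ E^Γ with ξ_j = ξ'_j for all j ≠ i } be the variation of F at site i. Then δ_i(F) ≤ 2 d^{3/2} L M (1 + 2√d M) for every i ∈ Γ, and consequently Σ_{i∈Γ} (δ_i(F))² ≤ |Γ| · (2 d^{3/2} L M (1 + 2√d M))². -/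

import Mathlib

noncomputable section

/-- The lattice `Γ = [N]^p`. -/
abbrev Idx (p N : ℕ) := Fin p → Fin N

/-- The window shape `Λ = [2k+1]^p`. -/
abbrev Win (p k : ℕ) := Fin p → Fin (2 * k + 1)

/-- The absolute lattice position of window coordinate `j` of the window `Λ_i` centered at
`i`, when it lies inside `Γ`; `none` when it falls outside `Γ`. -/
def winIdx? (p N k : ℕ) (i : Idx p N) (j : Win p k) : Option (Idx p N) :=
  if h : ∀ c, 0 ≤ (i c : ℤ) + (j c : ℤ) - (k : ℤ) ∧ (i c : ℤ) + (j c : ℤ) - (k : ℤ) < (N : ℤ)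
  then some (fun c => ⟨((i c : ℤ) + (j c : ℤ) - (k : ℤ)).toNat, by
    obtain ⟨h1, h2⟩ := h c; omega⟩)
  else none

/-- The restriction `x_{Λ_i ∩ Γ}` of a configuration `x : Γ → ℝ` to the part of the window
`Λ_i` lying inside `Γ`. -/
def winRestrict (p N k : ℕ) (x : Idx p N → ℝ) (i : Idx p N) :
    {j : Win p k // (winIdx? p N k i j).isSome} → ℝ :=
  fun j => x ((winIdx? p N k i j.val).get j.prop)

/-- The variation `δ_i(F)` at site `i` of `F(x) = ∑_ℓ f_ℓ(x_{Λ_ℓ ∩ Γ})`, over configurations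
with values in `E` agreeing off `i`. -/
def siteVariation (p N k : ℕ) (E : Set ℝ)
    (f : ∀ ℓ : Idx p N, EuclideanSpace ℝ {j : Win p k // (winIdx? p N k ℓ j).isSome} → ℝ)
    (i : Idx p N) : ℝ :=
  ⨆ ξ : {ξξ : (Idx p N → ℝ) × (Idx p N → ℝ) //
      (∀ ℓ, ξξ.1 ℓ ∈ E) ∧ (∀ ℓ, ξξ.2 ℓ ∈ E) ∧ ∀ j, j ≠ i → ξξ.1 j = ξξ.2 j},
    |(∑ ℓ, f ℓ (WithLp.toLp 2 (winRestrict p N k ξ.val.1 ℓ))) - ∑ ℓ, f ℓ (WithLp.toLp 2 (winRestrict p N k ξ.val.2 ℓ))|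

lemma winIdx?_spec {p N k : ℕ} {i m : Idx p N} {j : Win p k}
    (h : winIdx? p N k i j = some m) :
    ∀ c, (m c : ℤ) = (i c : ℤ) + (j c : ℤ) - (k : ℤ) := by
  unfold winIdx? at h
  split_ifs at h with hc
  · intro c
    obtain ⟨h1, h2⟩ := hc c
    have hm := congrFun (Option.some_injective _ h) c
    have : (m c : ℕ) = ((i c : ℤ) + (j c : ℤ) - (k : ℤ)).toNat := by
      rw [← hm]
    omega

/-- **Site-variation bound for sums of windowed PL(2) functions (key estimate for Külske's
concentration inequality).**  If each `f_i` is PL(2) with constant `L_i ≤ L` and the state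
space `E` is bounded by `M`, then `δ_i(F) ≤ 2 d^{3/2} L M (1 + 2√d M)` for every site `i`,
and hence `∑_i δ_i(F)² ≤ |Γ| (2 d^{3/2} L M (1 + 2√d M))²`. -/
theorem site_variation_bound
    (p : ℕ) (hp : p = 1 ∨ p = 2 ∨ p = 3) (k N : ℕ) (hN : 2 * k + 1 ≤ N)
    (E : Set ℝ) (M : ℝ) (hM : 0 ≤ M) (hME : ∀ x ∈ E, |x| ≤ M)
    (L : ℝ) (hL : 0 < L)
    (f : ∀ ℓ : Idx p N, EuclideanSpace ℝ {j : Win p k // (winIdx? p N k ℓ j).isSome} → ℝ)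
    (Lc : Idx p N → ℝ) (hLc : ∀ ℓ, 0 < Lc ℓ ∧ Lc ℓ ≤ L)
    (hf : ∀ ℓ, ∀ x y : EuclideanSpace ℝ {j : Win p k // (winIdx? p N k ℓ j).isSome},
      |f ℓ x - f ℓ y| ≤ Lc ℓ * (1 + ‖x‖ + ‖y‖) * ‖x - y‖) :
    (∀ i : Idx p N, siteVariation p N k E f i ≤
        2 * ((Fintype.card (Win p k) : ℝ) * Real.sqrt (Fintype.card (Win p k))) * L * M *
          (1 + 2 * Real.sqrt (Fintype.card (Win p k)) * M)) ∧
      ∑ i : Idx p N, (siteVariation p N k E f i) ^ 2 ≤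
        (Fintype.card (Idx p N) : ℝ) *
          (2 * ((Fintype.card (Win p k) : ℝ) * Real.sqrt (Fintype.card (Win p k))) * L * M *
            (1 + 2 * Real.sqrt (Fintype.card (Win p k)) * M)) ^ 2 := by
  classical
  set d : ℕ := Fintype.card (Win p k) with hd
  set s : ℝ := Real.sqrt d with hs
  set B : ℝ := 2 * ((d : ℝ) * s) * L * M * (1 + 2 * s * M) with hB
  have hd1 : (1 : ℕ) ≤ d := Fintype.card_pos
  have hs0 : 0 ≤ s := Real.sqrt_nonneg _
  have hs1 : 1 ≤ s := by
    rw [hs, Real.one_le_sqrt]; exact_mod_cast hd1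
  have hB0 : 0 ≤ B := by
    have : (0:ℝ) ≤ 1 + 2 * s * M := by positivity
    positivity
  -- norm bound for restrictions of configurations into E
  have hnorm : ∀ (ξ : Idx p N → ℝ), (∀ m, ξ m ∈ E) → ∀ ℓ
      (v : EuclideanSpace ℝ {j : Win p k // (winIdx? p N k ℓ j).isSome}),
      v = WithLp.toLp 2 (winRestrict p N k ξ ℓ) → ‖v‖ ≤ s * M := by
    intro ξ hξ ℓ v hv
    rw [EuclideanSpace.norm_eq v]
    subst hv
    have hsum : ∑ j : {j : Win p k // (winIdx? p N k ℓ j).isSome},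
        ‖winRestrict p N k ξ ℓ j‖ ^ 2 ≤ (d : ℝ) * M ^ 2 := by
      calc ∑ j : {j : Win p k // (winIdx? p N k ℓ j).isSome},
            ‖winRestrict p N k ξ ℓ j‖ ^ 2
          ≤ ∑ _j : {j : Win p k // (winIdx? p N k ℓ j).isSome}, M ^ 2 := by
            refine Finset.sum_le_sum fun j _ => ?_
            have : ‖winRestrict p N k ξ ℓ j‖ ≤ M := hME _ (hξ _)
            exact pow_le_pow_left₀ (norm_nonneg _) this 2
        _ = (Fintype.card {j : Win p k // (winIdx? p N k ℓ j).isSome} : ℝ) * M ^ 2 := by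
            simp [Finset.sum_const, nsmul_eq_mul]
        _ ≤ (d : ℝ) * M ^ 2 := by
            have := Fintype.card_subtype_le (fun j : Win p k => (winIdx? p N k ℓ j).isSome)
            exact mul_le_mul_of_nonneg_right (by exact_mod_cast this) (sq_nonneg M)
    calc Real.sqrt (∑ j : {j : Win p k // (winIdx? p N k ℓ j).isSome},
            ‖winRestrict p N k ξ ℓ j‖ ^ 2)
        ≤ Real.sqrt ((d : ℝ) * M ^ 2) := Real.sqrt_le_sqrt hsum
      _ = s * M := by
          rw [Real.sqrt_mul (by positivity), Real.sqrt_sq hM]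
  -- the key pointwise bound
  have key : ∀ i : Idx p N,
      ∀ ξ ξ' : Idx p N → ℝ, (∀ m, ξ m ∈ E) → (∀ m, ξ' m ∈ E) →
      (∀ j, j ≠ i → ξ j = ξ' j) →
      |(∑ ℓ, f ℓ (WithLp.toLp 2 (winRestrict p N k ξ ℓ))) - ∑ ℓ, f ℓ (WithLp.toLp 2 (winRestrict p N k ξ' ℓ))| ≤ B := by
    intro i ξ ξ' hξ hξ' hagree
    set C : ℝ := L * (1 + 2 * (s * M)) * (2 * M) with hC
    have hC0 : 0 ≤ C := by
      have : (0:ℝ) ≤ 1 + 2 * (s * M) := by positivity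
      positivity
    set S : Finset (Idx p N) :=
      Finset.univ.filter (fun ℓ => ∃ j : Win p k, winIdx? p N k ℓ j = some i) with hS
    -- per-term bound
    have hterm : ∀ ℓ : Idx p N,
        |f ℓ (WithLp.toLp 2 (winRestrict p N k ξ ℓ)) - f ℓ (WithLp.toLp 2 (winRestrict p N k ξ' ℓ))| ≤
          if ℓ ∈ S then C else 0 := by
      intro ℓ
      by_cases hℓ : ∃ j : Win p k, winIdx? p N k ℓ j = some i
      · obtain ⟨j₀, hj₀⟩ := hℓ
        have hmem : ℓ ∈ S := by simp [hS]; exact ⟨j₀, hj₀⟩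
        rw [if_pos hmem]
        have hj₀s : (winIdx? p N k ℓ j₀).isSome := by rw [hj₀]; rfl
        set x : EuclideanSpace ℝ {j : Win p k // (winIdx? p N k ℓ j).isSome} :=
          WithLp.toLp 2 (winRestrict p N k ξ ℓ) with hx
        set y : EuclideanSpace ℝ {j : Win p k // (winIdx? p N k ℓ j).isSome} :=
          WithLp.toLp 2 (winRestrict p N k ξ' ℓ) with hy
        -- norm of difference ≤ 2M
        have hdiff : ‖x - y‖ ≤ 2 * M := by
          rw [EuclideanSpace.norm_eq (x - y)]
          have hsingle : ∑ j : {j : Win p k // (winIdx? p N k ℓ j).isSome},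
              ‖(x - y) j‖ ^ 2 ≤ (2 * M) ^ 2 := by
            have hzero : ∀ j : {j : Win p k // (winIdx? p N k ℓ j).isSome},
                j.val ≠ j₀ → ‖(x - y) j‖ ^ 2 = 0 := by
              intro j hj
              have hget : (winIdx? p N k ℓ j.val).get j.prop ≠ i := by
                intro hgi
                have : winIdx? p N k ℓ j.val = some i := by
                  rw [← hgi]; exact (Option.some_get j.prop).symm
                have h1 := winIdx?_spec this
                have h2 := winIdx?_spec hj₀
                apply hj
                funext c
                have := h1 c
                have := h2 c
                exact Fin.ext (by omega)
              have : x j = y j := hagree _ hget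
              simp [PiLp.sub_apply, this]
            have hval : ∀ j : {j : Win p k // (winIdx? p N k ℓ j).isSome},
                ‖(x - y) j‖ ^ 2 ≤ if j.val = j₀ then (2 * M) ^ 2 else 0 := by
              intro j
              by_cases hj : j.val = j₀
              · rw [if_pos hj]
                have : ‖(x - y) j‖ ≤ 2 * M := by
                  have hxj : |ξ ((winIdx? p N k ℓ j.val).get j.prop)
                      - ξ' ((winIdx? p N k ℓ j.val).get j.prop)| ≤ 2 * M := by
                    have h1 := hME _ (hξ ((winIdx? p N k ℓ j.val).get j.prop))
                    have h2 := hME _ (hξ' ((winIdx? p N k ℓ j.val).get j.prop))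
                    calc |ξ ((winIdx? p N k ℓ j.val).get j.prop)
                          - ξ' ((winIdx? p N k ℓ j.val).get j.prop)|
                        ≤ |ξ ((winIdx? p N k ℓ j.val).get j.prop)|
                          + |ξ' ((winIdx? p N k ℓ j.val).get j.prop)| := abs_sub _ _
                      _ ≤ 2 * M := by linarith
                  simpa [PiLp.sub_apply, hx, hy, winRestrict, Real.norm_eq_abs] using hxj
                exact pow_le_pow_left₀ (norm_nonneg _) this 2
              · rw [if_neg hj, hzero j hj]
            set j' : {j : Win p k // (winIdx? p N k ℓ j).isSome} := ⟨j₀, hj₀s⟩ with hj'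
            calc ∑ j : {j : Win p k // (winIdx? p N k ℓ j).isSome}, ‖(x - y) j‖ ^ 2
                ≤ ∑ j : {j : Win p k // (winIdx? p N k ℓ j).isSome},
                    (if j.val = j₀ then (2 * M) ^ 2 else 0) :=
                  Finset.sum_le_sum fun j _ => hval j
              _ = ∑ j : {j : Win p k // (winIdx? p N k ℓ j).isSome},
                    (if j = j' then (2 * M) ^ 2 else 0) :=
                  Finset.sum_congr rfl fun j _ => by
                    simp only [hj', Subtype.ext_iff]
              _ ≤ (2 * M) ^ 2 := by
                  rw [Finset.sum_ite_eq' Finset.univ j' (fun _ => (2 * M) ^ 2)]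
                  simp [sq_nonneg]
          calc Real.sqrt (∑ j : {j : Win p k // (winIdx? p N k ℓ j).isSome}, ‖(x - y) j‖ ^ 2)
              ≤ Real.sqrt ((2 * M) ^ 2) := Real.sqrt_le_sqrt hsingle
            _ = 2 * M := Real.sqrt_sq (by positivity)
        have hx1 : ‖x‖ ≤ s * M := hnorm ξ hξ ℓ x hx
        have hy1 : ‖y‖ ≤ s * M := hnorm ξ' hξ' ℓ y hy
        obtain ⟨hLc1, hLc2⟩ := hLc ℓ
        calc |f ℓ x - f ℓ y| ≤ Lc ℓ * (1 + ‖x‖ + ‖y‖) * ‖x - y‖ := hf ℓ x y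
          _ ≤ L * (1 + 2 * (s * M)) * (2 * M) := by
              have h1 : (0:ℝ) ≤ 1 + ‖x‖ + ‖y‖ := by positivity
              have h2 : 1 + ‖x‖ + ‖y‖ ≤ 1 + 2 * (s * M) := by linarith
              have := mul_le_mul (mul_le_mul hLc2 h2 h1 hL.le) hdiff (norm_nonneg _)
                (by positivity)
              exact this
      · have hmem : ℓ ∉ S := by simp [hS]; intro j hj; exact hℓ ⟨j, hj⟩
        rw [if_neg hmem]
        have heq : winRestrict p N k ξ ℓ = winRestrict p N k ξ' ℓ := by
          funext j
          refine hagree _ fun hgi => ?_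
          exact hℓ ⟨j.val, by rw [← hgi]; exact (Option.some_get j.prop).symm⟩
        rw [heq]
        simp
    -- card S ≤ d
    have hcard : S.card ≤ d := by
      have hinj : Set.InjOn (fun ℓ : Idx p N =>
          if h : ∃ j : Win p k, winIdx? p N k ℓ j = some i then h.choose
          else Classical.arbitrary (Win p k)) S := by
        intro ℓ₁ h₁ ℓ₂ h₂ heq
        simp only [hS, Finset.mem_coe, Finset.mem_filter] at h₁ h₂
        obtain ⟨-, h₁⟩ := h₁
        obtain ⟨-, h₂⟩ := h₂
        simp only [dif_pos h₁, dif_pos h₂] at heq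
        have hc₁ := winIdx?_spec h₁.choose_spec
        have hc₂ := winIdx?_spec h₂.choose_spec
        funext c
        have e1 := hc₁ c
        have e2 := hc₂ c
        rw [heq] at e1
        exact Fin.ext (by omega)
      calc S.card ≤ Finset.univ.card :=
            Finset.card_le_card_of_injOn _ (fun a _ => Finset.mem_univ _) hinj
        _ = d := Finset.card_univ
    -- assemble
    calc |(∑ ℓ, f ℓ (WithLp.toLp 2 (winRestrict p N k ξ ℓ))) - ∑ ℓ, f ℓ (WithLp.toLp 2 (winRestrict p N k ξ' ℓ))|
        = |∑ ℓ, (f ℓ (WithLp.toLp 2 (winRestrict p N k ξ ℓ)) - f ℓ (WithLp.toLp 2 (winRestrict p N k ξ' ℓ)))| := by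
          rw [Finset.sum_sub_distrib]
      _ ≤ ∑ ℓ, |f ℓ (WithLp.toLp 2 (winRestrict p N k ξ ℓ)) - f ℓ (WithLp.toLp 2 (winRestrict p N k ξ' ℓ))| :=
          Finset.abs_sum_le_sum_abs _ _
      _ ≤ ∑ ℓ, (if ℓ ∈ S then C else 0) := Finset.sum_le_sum fun ℓ _ => hterm ℓ
      _ = S.card * C := by
          simp [Finset.sum_ite_mem, Finset.univ_inter, Finset.sum_const, nsmul_eq_mul]
      _ ≤ (d : ℝ) * C := mul_le_mul_of_nonneg_right (by exact_mod_cast hcard) hC0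
      _ ≤ B := by
          rw [hB, hC]
          nlinarith [mul_nonneg (mul_nonneg hL.le hM) (Nat.cast_nonneg (α := ℝ) d),
            mul_nonneg hs0 hM, mul_nonneg (mul_nonneg hL.le hM)
              (mul_nonneg (Nat.cast_nonneg (α := ℝ) d) (mul_nonneg hs0 hM)),
            (Nat.one_le_cast (α := ℝ)).mpr hd1]
  have main : ∀ i : Idx p N, siteVariation p N k E f i ≤ B := by
    intro i
    refine Real.iSup_le (fun ξ => ?_) hB0
    exact key i ξ.val.1 ξ.val.2 ξ.prop.1 ξ.prop.2.1 ξ.prop.2.2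
  refine ⟨main, ?_⟩
  have hnn : ∀ i : Idx p N, 0 ≤ siteVariation p N k E f i := fun i =>
    Real.iSup_nonneg fun ξ => abs_nonneg _
  calc ∑ i : Idx p N, (siteVariation p N k E f i) ^ 2
      ≤ ∑ _i : Idx p N, B ^ 2 := Finset.sum_le_sum fun i _ =>
        pow_le_pow_left₀ (hnn i) (main i) 2
    _ = (Fintype.card (Idx p N) : ℝ) * B ^ 2 := by
        simp [Finset.sum_const, nsmul_eq_mul]

end
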